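/- Let $w:\mathbb{R}\to[0,\infty)$ be $C^2$ and positive on all of $\mathbb{R}$, even, with $w'(0)=0$, satisfying $-w''+\beta w^{\beta-1}=\lambda$ on $\mathbb{R}$ for some $\lambda\in\mathbb{R}$ and $0<\beta<1$, and with $w(x)\to 0$ as $x\to+\infty$. Then one reaches a contradiction: no such $w$ exists. (Consequently any such solution must have compact support.) -/

import Mathlib

open Filter

lemma aux_deriv_ge_one (f : ℝ → ℝ) (hf : Differentiable ℝ f) (a : ℝ)
    (h : ∀ x ∈ Set.Ici a, 1 ≤ deriv f x) : Tendsto f atTop atTop := by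
  have hmono : MonotoneOn (fun x => f x - x) (Set.Ici a) := by
    apply monotoneOn_of_deriv_nonneg (convex_Ici a)
      (Continuous.continuousOn (hf.continuous.sub continuous_id))
      (fun x hx => ((hf x).sub differentiableAt_id).differentiableWithinAt)
    intro x hx
    rw [interior_Ici] at hx
    have hd : deriv (fun y => f y - y) x = deriv f x - 1 := by
      simp [deriv_fun_sub (hf x) differentiableAt_fun_id]
    rw [show deriv (f - id) x = deriv f x - 1 from hd]
    linarith [h x (Set.mem_Ici.mpr (le_of_lt hx))]
  have hb : ∀ x ≥ a, x + (f a - a) ≤ f x := by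
    intro x hx
    have := hmono (Set.self_mem_Ici) hx hx
    dsimp at this; linarith
  exact tendsto_atTop_mono' atTop (eventually_atTop.2 ⟨a, hb⟩)
    (tendsto_atTop_add_const_right _ _ tendsto_id)

/-- No globally positive even `C²` solution of `-w'' + β w^{β-1} = λ` (with
`0 < β < 1`, `w'(0)=0`) can tend to `0` at `+∞`: any such solution must have
compact support. -/
theorem stmt_7 (β lam : ℝ) (hβ0 : 0 < β) (hβ1 : β < 1) (w : ℝ → ℝ)
    (hw : ContDiff ℝ 2 w) (hpos : ∀ x, 0 < w x)
    (heven : ∀ x, w (-x) = w x) (h0 : deriv w 0 = 0)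
    (hode : ∀ x, -(deriv (deriv w) x) + β * w x ^ (β - 1) = lam)
    (hlim : Tendsto w atTop (nhds 0)) :
    False := by
  have hd1 : Differentiable ℝ w := hw.differentiable (by norm_num)
  have hw' : ContDiff ℝ 1 (deriv w) := by
    exact (contDiff_succ_iff_deriv.mp
      (show ContDiff ℝ ((1 : ℕ∞) + 1) w from hw)).2.2
  have hd2 : Differentiable ℝ (deriv w) := hw'.differentiable (by norm_num)
  -- w^(β-1) → ∞
  have hlim' : Tendsto w atTop (nhdsWithin 0 (Set.Ioi 0)) :=
    tendsto_nhdsWithin_of_tendsto_nhds_of_eventually_within _ hlim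
      (Eventually.of_forall fun x => hpos x)
  have hrpow : Tendsto (fun x => w x ^ (β - 1)) atTop atTop := by
    have h1 : Tendsto (fun x => (w x)⁻¹) atTop atTop := hlim'.inv_tendsto_nhdsGT_zero
    have h2 : Tendsto (fun x => ((w x)⁻¹) ^ (1 - β)) atTop atTop :=
      (tendsto_rpow_atTop (by linarith)).comp h1
    refine h2.congr fun x => ?_
    rw [Real.inv_rpow (hpos x).le, ← Real.rpow_neg (hpos x).le, neg_sub]
  -- w'' → ∞
  have hdd : Tendsto (deriv (deriv w)) atTop atTop := by
    have : Tendsto (fun x => β * w x ^ (β - 1) - lam) atTop atTop :=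
      tendsto_atTop_add_const_right _ (-lam) (hrpow.const_mul_atTop hβ0)
    refine this.congr fun x => ?_
    linarith [hode x]
  obtain ⟨a, ha⟩ := eventually_atTop.1 (hdd.eventually_ge_atTop 1)
  have hw'top : Tendsto (deriv w) atTop atTop :=
    aux_deriv_ge_one (deriv w) hd2 a (fun x hx => ha x hx)
  obtain ⟨b, hb⟩ := eventually_atTop.1 (hw'top.eventually_ge_atTop 1)
  have hwtop : Tendsto w atTop atTop :=
    aux_deriv_ge_one w hd1 b (fun x hx => hb x hx)
  have h1 := hwtop.eventually_ge_atTop 1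
  have h2 := hlim.eventually (gt_mem_nhds (by norm_num : (0:ℝ) < 1))
  obtain ⟨x, hx1, hx2⟩ := (h1.and h2).exists
  linarith
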